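/- Let A = k[t] and let G be a bounded complex of finitely generated free graded A-modules whose homology modules are all torsion. Then for all i, j, the functional χ_{i,j} evaluated on the Betti table of G is nonnegative. -/

import Mathlib

open Cardinal

/-- If `N ≤ P` and `P/N` is torsion, the ranks agree (over a domain). -/
lemma rank_eq_of_torsion_quotient {R M : Type*} [CommRing R] [IsDomain R]
    [AddCommGroup M] [Module R M] {N P : Submodule R M} (hNP : N ≤ P)
    (h : ∀ x ∈ P, ∃ r : R, r ≠ 0 ∧ r • x ∈ N) :
    Module.rank R P = Module.rank R N := by
  have hq : Module.rank R (P ⧸ N.comap P.subtype) = 0 := by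
    rw [rank_eq_zero_iff]
    intro x
    obtain ⟨x, rfl⟩ := Submodule.Quotient.mk_surjective _ x
    obtain ⟨r, hr, hrx⟩ := h x x.2
    refine ⟨r, hr, ?_⟩
    rw [← Submodule.Quotient.mk_smul, Submodule.Quotient.mk_eq_zero]
    simpa [Submodule.mem_comap] using hrx
  have := Submodule.rank_quotient_add_rank (R := R) (M := P) (N.comap P.subtype)
  rw [hq, zero_add] at this
  rw [← this]
  exact (Submodule.comapSubtypeEquivOfLe hNP).rank_eq

/-- Summing fiber cardinalities over a set of values. -/
lemma finsum_mem_card_fiber {n : ℕ} (f : Fin n → ℤ) (P : ℤ → Prop) [DecidablePred P] :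
    ∑ᶠ m ∈ {x : ℤ | P x}, ((Finset.univ.filter fun a => f a = m).card : ℚ)
      = ((Finset.univ.filter fun a => P (f a)).card : ℚ) := by
  classical
  set T : Finset ℤ := (Finset.image f Finset.univ).filter P with hT
  have h1 : ∑ᶠ m ∈ {x : ℤ | P x}, ((Finset.univ.filter fun a => f a = m).card : ℚ)
      = ∑ m ∈ T, ((Finset.univ.filter fun a => f a = m).card : ℚ) := by
    apply finsum_mem_eq_sum_of_inter_support_eq
    ext m
    simp only [Set.mem_inter_iff, Function.mem_support, Finset.coe_filter, Set.mem_setOf_eq,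
      hT, Finset.mem_image, Finset.mem_univ, true_and, Finset.mem_filter]
    constructor
    · rintro ⟨hms, hne⟩
      refine ⟨⟨?_, hms⟩, hne⟩
      by_contra hc
      push_neg at hc
      apply hne
      rw [Finset.filter_eq_empty_iff.mpr (by simpa using hc)]
      simp
    · rintro ⟨⟨_, hms⟩, hne⟩
      exact ⟨hms, hne⟩
  rw [h1]
  rw [← Nat.cast_sum]
  norm_cast
  rw [Finset.card_eq_sum_card_fiberwise (t := T) (f := f)
    (fun a ha => by
      simp only [Finset.coe_filter, Finset.mem_filter, Finset.mem_coe, Set.mem_setOf_eq, Finset.mem_univ, true_and] at ha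
      simp [hT, ha])]
  apply Finset.sum_congr rfl
  intro m hm
  simp only [hT, Finset.mem_filter] at hm
  congr 1
  ext a
  simp only [Finset.mem_filter, Finset.mem_univ, true_and, iff_and_self]
  intro h2; exact h2 ▸ hm.2

/-- Rank bound for a homogeneous minimal matrix: the rank of the map is at most the number
of target generators of degree `≤ j` plus the number of source generators of degree `> j+1`. -/
lemma rank_range_le_card {k : Type*} [Field k] {n m : ℕ}
    (dg1 : Fin n → ℤ) (dg0 : Fin m → ℤ) (j : ℤ)
    (f : (Fin n → Polynomial k) →ₗ[Polynomial k] (Fin m → Polynomial k))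
    (hmin : ∀ a b, dg1 a ≤ dg0 b → f (Pi.single a 1) b = 0) :
    Module.rank (Polynomial k) (LinearMap.range f)
      ≤ ((Finset.univ.filter fun b => dg0 b ≤ j).card : Cardinal)
        + ((Finset.univ.filter fun a => j + 1 < dg1 a).card : Cardinal) := by
  classical
  set R := Polynomial k
  set Low : Finset (Fin m) := Finset.univ.filter fun b => dg0 b ≤ j with hLow
  set Hi : Finset (Fin n) := Finset.univ.filter fun a => j + 1 < dg1 a with hHi
  set W : Submodule R (Fin m → R) :=
    Submodule.span R ((Low.image fun b => Pi.single b (1 : R)) : Set (Fin m → R)) with hW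
  set T : Submodule R (Fin m → R) :=
    Submodule.span R ((Hi.image fun a => f (Pi.single a 1)) : Set (Fin m → R)) with hT
  have hle : LinearMap.range f ≤ W ⊔ T := by
    rintro _ ⟨y, rfl⟩
    have hy : y = ∑ a, Pi.single a (y a) := by
      ext b; simp [Finset.sum_apply, Pi.single_apply]
    rw [hy, map_sum]
    refine Submodule.sum_mem _ fun a _ => ?_
    have hsingle : Pi.single a (y a) = y a • (Pi.single a (1 : R) : Fin n → R) := by
      ext b; simp [Pi.single_apply, mul_comm]
    rw [hsingle, map_smul]
    by_cases ha : j + 1 < dg1 a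
    · exact Submodule.mem_sup_right (Submodule.smul_mem _ _ (Submodule.subset_span
        (by exact Finset.mem_coe.mpr (Finset.mem_image_of_mem _ (by simp [hHi, ha])))))
    · push_neg at ha
      refine Submodule.mem_sup_left (Submodule.smul_mem _ _ ?_)
      have hfy : f (Pi.single a 1) = ∑ b, Pi.single b (f (Pi.single a 1) b) := by
        ext b'; simp [Finset.sum_apply, Pi.single_apply]
      rw [hfy]
      refine Submodule.sum_mem _ fun b _ => ?_
      by_cases hb : dg0 b ≤ j
      · have : Pi.single b (f (Pi.single a 1) b)
            = f (Pi.single a 1) b • (Pi.single b (1 : R) : Fin m → R) := by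
          ext b'; simp [Pi.single_apply, mul_comm]
        rw [this]
        exact Submodule.smul_mem _ _ (Submodule.subset_span (Finset.mem_coe.mpr
          (Finset.mem_image_of_mem _ (by simp [hLow, hb]))))
      · push_neg at hb
        rw [hmin a b (ha.trans hb), Pi.single_zero]
        exact Submodule.zero_mem _
  calc Module.rank R (LinearMap.range f) ≤ Module.rank R (W ⊔ T : Submodule R (Fin m → R)) :=
        Submodule.rank_mono hle
    _ ≤ Module.rank R W + Module.rank R T := Submodule.rank_add_le_rank_add_rank W T
    _ ≤ ((Low.image fun b => Pi.single b (1 : R)).card : Cardinal)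
          + ((Hi.image fun a => f (Pi.single a 1)).card : Cardinal) := by
        exact add_le_add (rank_span_finset_le _) (rank_span_finset_le _)
    _ ≤ (Low.card : Cardinal) + (Hi.card : Cardinal) := by
        exact add_le_add (Nat.cast_le.mpr (Finset.card_image_le))
          (Nat.cast_le.mpr (Finset.card_image_le))

/-- The Eisenbud–Erman functional `χ_{i,j}` on Betti tables over `A = k[t]`. -/
noncomputable def chiFunctional (β : ℤ → ℤ → ℚ) (i j : ℤ) : ℚ :=
  (∑ᶠ m ∈ Set.Iic j, β i m) - (∑ᶠ m ∈ Set.Iic (j + 1), β (i + 1) m)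
    + ∑ᶠ p ∈ Set.Ici (i + 2), (-1 : ℚ) ^ (p - i) * ∑ᶠ m : ℤ, β p m

/-- The Betti table of a minimal complex of graded free modules, given by counting
generators: `β_{i,j}` is the number of generators of `F_i` of degree `j`. -/
noncomputable def bettiTable (rank : ℤ → ℕ) (deg : ∀ i : ℤ, Fin (rank i) → ℤ) :
    ℤ → ℤ → ℚ :=
  fun i j => ((Finset.univ.filter fun a => deg i a = j).card : ℚ)

/-- **Nonnegativity of `χ_{i,j}` on complexes with torsion homology.** Let `A = k[t]`
and let `G` be a bounded minimal complex of finitely generated graded free `A`-modules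
(given by ranks, generator degrees, and homogeneous differentials `d i : G_{i+1} → G_i`
with entries in `(t)`). If all homology modules of `G` are torsion, then
`χ_{i,j}(β(G)) ≥ 0` for all `i, j`. -/
theorem chi_nonneg_of_torsion_homology (k : Type*) [Field k]
    (rank : ℤ → ℕ) (deg : ∀ i : ℤ, Fin (rank i) → ℤ)
    (d : ∀ i : ℤ,
      (Fin (rank (i + 1)) → Polynomial k) →ₗ[Polynomial k] (Fin (rank i) → Polynomial k))
    (hbdd : {i : ℤ | rank i ≠ 0}.Finite)
    (hcomplex : ∀ i, (d i).comp (d (i + 1)) = 0)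
    (hminhom : ∀ (i : ℤ) (a : Fin (rank (i + 1))) (b : Fin (rank i)),
      (∃ c : k, d i (Pi.single a 1) b
          = Polynomial.C c * Polynomial.X ^ (deg (i + 1) a - deg i b).toNat) ∧
        (deg (i + 1) a ≤ deg i b → d i (Pi.single a 1) b = 0))
    (htorsion : ∀ (i : ℤ) (x : Fin (rank (i + 1)) → Polynomial k), d i x = 0 →
      ∃ (N : ℕ) (y : Fin (rank (i + 1 + 1)) → Polynomial k),
        d (i + 1) y = (Polynomial.X : Polynomial k) ^ N • x) :
    ∀ i j : ℤ, 0 ≤ chiFunctional (bettiTable rank deg) i j := by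
  classical
  intro i j
  set R := Polynomial k with hR
  set ρ : ℤ → ℕ := fun p => (Module.rank R (LinearMap.range (d p))).toNat with hρ
  have hfinrange : ∀ p, Module.rank R (LinearMap.range (d p)) < Cardinal.aleph0 := fun p =>
    (Submodule.rank_le _).trans_lt (by rw [rank_fun']; exact Cardinal.nat_lt_aleph0 _)
  have hrange_card : ∀ p, Module.rank R (LinearMap.range (d p)) = (ρ p : Cardinal) := fun p =>
    (Cardinal.cast_toNat_of_lt_aleph0 (hfinrange p)).symm
  -- rank-nullity + torsion homology:  rank (p+1) = ρ p + ρ (p+1)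
  have F1 : ∀ p : ℤ, rank (p + 1) = ρ p + ρ (p + 1) := by
    intro p
    have hker : Module.rank R (LinearMap.ker (d p))
        = Module.rank R (LinearMap.range (d (p + 1))) := by
      apply rank_eq_of_torsion_quotient (LinearMap.range_le_ker_iff.mpr (hcomplex p))
      intro x hx
      obtain ⟨N, y, hy⟩ := htorsion p x (LinearMap.mem_ker.mp hx)
      exact ⟨Polynomial.X ^ N, pow_ne_zero _ Polynomial.X_ne_zero, ⟨y, hy⟩⟩
    have hrn := LinearMap.rank_range_add_rank_ker (d p)
    rw [hker, rank_fun', hrange_card, hrange_card] at hrn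
    simp only [Fintype.card_fin] at hrn
    exact_mod_cast hrn.symm
  -- the key rank bound at (i, j)
  have F3 : ρ i ≤ (Finset.univ.filter fun b => deg i b ≤ j).card
      + (Finset.univ.filter fun a => j + 1 < deg (i + 1) a).card := by
    have h := rank_range_le_card (deg (i + 1)) (deg i) j (d i)
      (fun a b hab => (hminhom i a b).2 hab)
    rw [hrange_card] at h
    exact_mod_cast h
  -- the three finsum computations
  have h1 : ∑ᶠ m ∈ Set.Iic j, bettiTable rank deg i m
      = ((Finset.univ.filter fun a => deg i a ≤ j).card : ℚ) := by
    exact finsum_mem_card_fiber (deg i) (fun m => m ≤ j)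
  have h2 : ∑ᶠ m ∈ Set.Iic (j + 1), bettiTable rank deg (i + 1) m
      = ((Finset.univ.filter fun a => deg (i + 1) a ≤ j + 1).card : ℚ) := by
    exact finsum_mem_card_fiber (deg (i + 1)) (fun m => m ≤ j + 1)
  have h3 : ∀ p, ∑ᶠ m : ℤ, bettiTable rank deg p m = (rank p : ℚ) := by
    intro p
    rw [← finsum_mem_univ]
    have := finsum_mem_card_fiber (deg p) (fun _ => True)
    simpa [bettiTable] using this
  -- boundedness setup
  obtain ⟨b, hb⟩ := hbdd.bddAbove
  set n : ℕ := (b - i - 1).toNat with hn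
  have hbound : ∀ p : ℤ, rank p ≠ 0 → p < i + 2 + n := by
    intro p hp
    have h1' : p ≤ b := hb hp
    have h2' : b - i - 1 ≤ (n : ℤ) := Int.self_le_toNat _
    omega
  have hrankzero : rank (i + 2 + n) = 0 := by
    by_contra hc
    exact absurd (hbound _ hc) (lt_irrefl _)
  have hρzero : ρ (i + 1 + n) = 0 := by
    have h := F1 (i + 1 + n)
    rw [show (i + 1 + (n : ℤ)) + 1 = i + 2 + n by ring, hrankzero] at h
    omega
  -- telescoping
  have htel : ∀ N : ℕ, ∑ q ∈ Finset.range N, (-1 : ℚ) ^ q * (rank (i + 2 + q) : ℚ)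
      = (ρ (i + 1) : ℚ) - (-1 : ℚ) ^ N * (ρ (i + 1 + N) : ℚ) := by
    intro N
    induction N with
    | zero => simp
    | succ N ih =>
      have hF : (rank (i + 2 + (N : ℤ)) : ℚ)
          = (ρ (i + 1 + N) : ℚ) + (ρ (i + 2 + N) : ℚ) := by
        have h := F1 (i + 1 + N)
        rw [show (i + 1 + (N : ℤ)) + 1 = i + 2 + N by ring] at h
        exact_mod_cast h
      have hidx : (i + 1 + ((N : ℤ) + 1)) = i + 2 + N := by ring
      rw [Finset.sum_range_succ, ih, hF, pow_succ,
        show ((N + 1 : ℕ) : ℤ) = (N : ℤ) + 1 by push_cast; ring, hidx]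
      ring
  -- compute the tail finsum
  have h4 : ∑ᶠ p ∈ Set.Ici (i + 2), (-1 : ℚ) ^ (p - i) * (rank p : ℚ) = (ρ (i + 1) : ℚ) := by
    have heq : ∑ᶠ p ∈ Set.Ici (i + 2), (-1 : ℚ) ^ (p - i) * (rank p : ℚ)
        = ∑ p ∈ (Finset.range n).image (fun q : ℕ => i + 2 + (q : ℤ)),
            (-1 : ℚ) ^ (p - i) * (rank p : ℚ) := by
      apply finsum_mem_eq_sum_of_inter_support_eq
      ext p
      simp only [Set.mem_inter_iff, Set.mem_Ici, Function.mem_support, Finset.coe_image,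
        Finset.coe_range, Set.mem_image, Set.mem_Iio]
      constructor
      · rintro ⟨hp, hne⟩
        have hrk : rank p ≠ 0 := by
          intro h0; apply hne; rw [h0]; simp
        have hlt := hbound p hrk
        refine ⟨⟨(p - (i + 2)).toNat, by omega, ?_⟩, hne⟩
        have : ((p - (i + 2)).toNat : ℤ) = p - (i + 2) := Int.toNat_of_nonneg (by omega)
        omega
      · rintro ⟨⟨q, hq, rfl⟩, hne⟩
        exact ⟨by omega, hne⟩
    rw [heq, Finset.sum_image (by intro x _ y _ h; have h' : i + 2 + (x : ℤ) = i + 2 + (y : ℤ) := h; omega)]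
    have hsgn : ∀ q : ℕ, (-1 : ℚ) ^ ((i + 2 + (q : ℤ)) - i) = (-1 : ℚ) ^ q := by
      intro q
      rw [show (i + 2 + (q : ℤ)) - i = (q : ℤ) + 2 by ring,
        zpow_add₀ (by norm_num : (-1 : ℚ) ≠ 0), zpow_natCast]
      norm_num
    calc ∑ q ∈ Finset.range n, (-1 : ℚ) ^ ((i + 2 + (q : ℤ)) - i) * (rank (i + 2 + (q : ℤ)) : ℚ)
        = ∑ q ∈ Finset.range n, (-1 : ℚ) ^ q * (rank (i + 2 + (q : ℤ)) : ℚ) :=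
          Finset.sum_congr rfl fun q _ => by rw [hsgn q]
      _ = (ρ (i + 1) : ℚ) - (-1 : ℚ) ^ n * (ρ (i + 1 + n) : ℚ) := htel n
      _ = (ρ (i + 1) : ℚ) := by rw [hρzero]; simp
  -- assemble
  have hsplit : (Finset.univ.filter fun a => deg (i + 1) a ≤ j + 1).card
      + (Finset.univ.filter fun a => j + 1 < deg (i + 1) a).card = rank (i + 1) := by
    rw [show (Finset.univ.filter fun a => j + 1 < deg (i + 1) a)
        = Finset.univ.filter fun a => ¬ (deg (i + 1) a ≤ j + 1) by
      apply Finset.filter_congr; intro a _; simp [not_le]]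
    rw [Finset.card_filter_add_card_filter_not]
    simp
  unfold chiFunctional
  rw [h1, h2]
  have houter : ∑ᶠ p ∈ Set.Ici (i + 2), (-1 : ℚ) ^ (p - i) * ∑ᶠ m : ℤ, bettiTable rank deg p m
      = ∑ᶠ p ∈ Set.Ici (i + 2), (-1 : ℚ) ^ (p - i) * (rank p : ℚ) :=
    finsum_mem_congr rfl fun p _ => by rw [h3 p]
  rw [houter, h4]
  have q1 : ((Finset.univ.filter fun a => deg (i + 1) a ≤ j + 1).card : ℚ)
      + ((Finset.univ.filter fun a => j + 1 < deg (i + 1) a).card : ℚ) = (rank (i + 1) : ℚ) := by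
    exact_mod_cast congrArg (Nat.cast : ℕ → ℚ) hsplit
  have q2 : (rank (i + 1) : ℚ) = (ρ i : ℚ) + (ρ (i + 1) : ℚ) := by
    exact_mod_cast congrArg (Nat.cast : ℕ → ℚ) (F1 i)
  have q3 : (ρ i : ℚ) ≤ ((Finset.univ.filter fun b => deg i b ≤ j).card : ℚ)
      + ((Finset.univ.filter fun a => j + 1 < deg (i + 1) a).card : ℚ) := by
    exact_mod_cast F3
  linarith
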